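/- Let Ω = {(z₁, z₂) ∈ ℂ² : x₁ > 0, y₁ > 0}, where z_α = x_α + i y_α, and set θ₁ = arctan(y₁/x₁). Define u₁ = -θ₁, u₂ = -y₂θ₁/y₁, and the vector fields Ṽ₁ = x₁∂/∂x₁ + y₁∂/∂y₁ + y₂(x₁/y₁ - 1/θ₁)∂/∂x₂ + y₂∂/∂y₂ and Ṽ₂ = (y₁/θ₁)∂/∂x₂ on Ω. Then du_α(Ṽ_β) = 0 and d^cu_α(Ṽ_β) = δ_{αβ} for α, β ∈ {1,2}, and the Lie brackets satisfy [Ṽ₁, Ṽ₂] = Ṽ₂, [JṼ₁, JṼ₂] = Ṽ₂, [Ṽ₁, JṼ₁] = (2y₂/y₁)(x₁/y₁ - 1/θ₁)Ṽ₂, [Ṽ₁, JṼ₂] = -(x₁/y₁ - 1/θ₁)Ṽ₂, and [Ṽ₂, JṼ₂] = 0. In particular ρ(E₁) = Ṽ₁, ρ(E₂) = Ṽ₂ defines a Lie algebra homomorphism from the two-dimensional nonabelian Lie algebra with [E₁,E₂] = E₂ into vector fields, but Ṽ₁, Ṽ₂, JṼ₁, JṼ₂ do not span a Lie subalgebra of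 Γ(Ω, TΩ) with constant structure constants, since [Ṽ₁, JṼ₁] has a nonconstant coefficient. -/

import Mathlib

open VectorField

noncomputable section

/-- `θ₁ = arctan (y₁ / x₁)` on `ℂ²` (a real vector field on `ℂ²` is encoded as a map
`ℂ² → ℂ²`, with `∂/∂x_α ↦ Pi.single α 1`, `∂/∂y_α ↦ Pi.single α i`, `J X = i • X`). -/
def theta1 (z : Fin 2 → ℂ) : ℝ := Real.arctan ((z 0).im / (z 0).re)

/-- The domain `Ω = {x₁ > 0, y₁ > 0} ⊆ ℂ²`. -/
def affOmega : Set (Fin 2 → ℂ) := {z | 0 < (z 0).re ∧ 0 < (z 0).im}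

/-- `Ṽ₁ = x₁∂/∂x₁ + y₁∂/∂y₁ + y₂(x₁/y₁ - 1/θ₁)∂/∂x₂ + y₂∂/∂y₂`. -/
def affV1 (z : Fin 2 → ℂ) : Fin 2 → ℂ :=
  ![z 0,
    (((z 1).im * ((z 0).re / (z 0).im - 1 / theta1 z) : ℝ) : ℂ)
      + ((z 1).im : ℂ) * Complex.I]

/-- `Ṽ₂ = (y₁/θ₁)∂/∂x₂`. -/
def affV2 (z : Fin 2 → ℂ) : Fin 2 → ℂ :=
  ![0, (((z 0).im / theta1 z : ℝ) : ℂ)]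

/-- `u₁ = -θ₁`. -/
def affu1 (z : Fin 2 → ℂ) : ℝ := -theta1 z

/-- `u₂ = -y₂θ₁/y₁`. -/
def affu2 (z : Fin 2 → ℂ) : ℝ := -((z 1).im * theta1 z / (z 0).im)



def Lre (i : Fin 2) : (Fin 2 → ℂ) →L[ℝ] ℝ :=
  Complex.reCLM.comp (ContinuousLinearMap.proj i)

def Lim (i : Fin 2) : (Fin 2 → ℂ) →L[ℝ] ℝ :=
  Complex.imCLM.comp (ContinuousLinearMap.proj i)

@[simp] lemma Lre_apply (i : Fin 2) (w : Fin 2 → ℂ) : Lre i w = (w i).re := rfl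
@[simp] lemma Lim_apply (i : Fin 2) (w : Fin 2 → ℂ) : Lim i w = (w i).im := rfl


def Dth (z : Fin 2 → ℂ) : (Fin 2 → ℂ) →L[ℝ] ℝ :=
  ((z 0).re / ((z 0).re ^ 2 + (z 0).im ^ 2)) • Lim 0
    - ((z 0).im / ((z 0).re ^ 2 + (z 0).im ^ 2)) • Lre 0

lemma hasFDerivAt_theta1 {z : Fin 2 → ℂ} (hx : 0 < (z 0).re) :
    HasFDerivAt theta1 (Dth z) z := by
  set x := (z 0).re
  set y := (z 0).im
  have hx' : x ≠ 0 := ne_of_gt hx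
  have hq : HasFDerivAt (fun w : Fin 2 → ℂ => (w 0).im / (w 0).re)
      ((x⁻¹) • Lim 0 - (y / x ^ 2) • Lre 0) z := by
    have h1 : HasFDerivAt (fun w : Fin 2 → ℂ => (w 0).im) (Lim 0) z := (Lim 0).hasFDerivAt
    have h2 : HasFDerivAt (fun w : Fin 2 → ℂ => (w 0).re) (Lre 0) z := (Lre 0).hasFDerivAt
    have h3 : HasFDerivAt (fun w : Fin 2 → ℂ => ((w 0).re)⁻¹) (-((x^2)⁻¹ • Lre 0)) z := by
      have := (hasDerivAt_inv hx').comp_hasFDerivAt z h2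
      simpa [Function.comp_def, neg_smul] using this
    have := h1.mul h3
    have h0 : (fun w : Fin 2 → ℂ => (w 0).im / (w 0).re)
        = fun w : Fin 2 → ℂ => (w 0).im * ((w 0).re)⁻¹ := by
      funext w; rw [div_eq_mul_inv]
    rw [h0]
    refine this.congr_fderiv ?_
    ext w
    simp [smul_sub, div_eq_mul_inv]
    ring
  have ha := (Real.hasDerivAt_arctan (y / x)).comp_hasFDerivAt z hq
  refine ha.congr_fderiv ?_
  ext w
  simp [Dth, smul_sub]
  have h4 : x ^ 2 + y ^ 2 ≠ 0 := by positivity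
  have h5 : 1 + (y / x) ^ 2 ≠ 0 := by positivity
  have h6 : (z 0).re ^ 2 + (z 0).im ^ 2 ≠ 0 := h4
  field_simp
  ring

lemma theta1_pos {z : Fin 2 → ℂ} (hx : 0 < (z 0).re) (hy : 0 < (z 0).im) :
    0 < theta1 z := by
  have := Real.arctan_strictMono (div_pos hy hx)
  simpa [Real.arctan_zero, theta1] using this

/-- c = x/y - 1/θ -/
def cfun (z : Fin 2 → ℂ) : ℝ := (z 0).re / (z 0).im - 1 / theta1 z

def Dc (z : Fin 2 → ℂ) : (Fin 2 → ℂ) →L[ℝ] ℝ :=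
  ((z 0).im)⁻¹ • Lre 0 - ((z 0).re / (z 0).im ^ 2) • Lim 0 + (theta1 z ^ 2)⁻¹ • Dth z

lemma hasFDerivAt_inv_im0 {z : Fin 2 → ℂ} (hy : 0 < (z 0).im) :
    HasFDerivAt (fun w : Fin 2 → ℂ => ((w 0).im)⁻¹) (-((((z 0).im)^2)⁻¹ • Lim 0)) z := by
  have := (hasDerivAt_inv (ne_of_gt hy)).comp_hasFDerivAt z (Lim 0).hasFDerivAt
  simpa [Function.comp_def, neg_smul] using this

lemma hasFDerivAt_inv_theta1 {z : Fin 2 → ℂ} (hx : 0 < (z 0).re) (hy : 0 < (z 0).im) :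
    HasFDerivAt (fun w : Fin 2 → ℂ => (theta1 w)⁻¹) (-((theta1 z ^ 2)⁻¹ • Dth z)) z := by
  have := (hasDerivAt_inv (ne_of_gt (theta1_pos hx hy))).comp_hasFDerivAt z
    (hasFDerivAt_theta1 hx)
  simpa [Function.comp_def, neg_smul] using this

lemma hasFDerivAt_cfun {z : Fin 2 → ℂ} (hx : 0 < (z 0).re) (hy : 0 < (z 0).im) : HasFDerivAt cfun (Dc z) z := by
  have h1 : HasFDerivAt (fun w : Fin 2 → ℂ => (w 0).re * ((w 0).im)⁻¹)
      (((z 0).re) • (-((((z 0).im)^2)⁻¹ • Lim 0)) + (((z 0).im)⁻¹) • Lre 0) z :=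
    (Lre 0).hasFDerivAt.mul (hasFDerivAt_inv_im0 hy)
  have h2 := hasFDerivAt_inv_theta1 hx hy
  have h := h1.sub h2
  have h0 : cfun = fun w : Fin 2 → ℂ =>
      (w 0).re * ((w 0).im)⁻¹ - (theta1 w)⁻¹ := by
    funext w; simp [cfun, div_eq_mul_inv, one_mul]
  rw [h0]
  refine h.congr_fderiv ?_
  ext w
  simp [Dc, smul_sub, div_eq_mul_inv]
  ring


/-- derivative of a = y₂ * c -/
def Da (z : Fin 2 → ℂ) : (Fin 2 → ℂ) →L[ℝ] ℝ :=
  ((z 1).im) • Dc z + (cfun z) • Lim 1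

lemma hasFDerivAt_afun {z : Fin 2 → ℂ} (hx : 0 < (z 0).re) (hy : 0 < (z 0).im) :
    HasFDerivAt (fun w => (w 1).im * cfun w) (Da z) z :=
  (Lim 1).hasFDerivAt.mul (hasFDerivAt_cfun hx hy)

/-- derivative of b = y/θ -/
def Db (z : Fin 2 → ℂ) : (Fin 2 → ℂ) →L[ℝ] ℝ :=
  (theta1 z)⁻¹ • Lim 0 - ((z 0).im / theta1 z ^ 2) • Dth z

lemma hasFDerivAt_bfun {z : Fin 2 → ℂ} (hx : 0 < (z 0).re) (hy : 0 < (z 0).im) :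
    HasFDerivAt (fun w => (w 0).im / theta1 w) (Db z) z := by
  have h := (Lim 0).hasFDerivAt.mul (hasFDerivAt_inv_theta1 hx hy)
  have h0 : (fun w : Fin 2 → ℂ => (w 0).im / theta1 w)
      = fun w => (w 0).im * (theta1 w)⁻¹ := by
    funext w; rw [div_eq_mul_inv]
  rw [h0]
  refine h.congr_fderiv ?_
  ext w
  simp [Db, smul_sub, div_eq_mul_inv]
  ring

def Du2 (z : Fin 2 → ℂ) : (Fin 2 → ℂ) →L[ℝ] ℝ :=
  -((theta1 z / (z 0).im) • Lim 1 + ((z 1).im / (z 0).im) • Dth z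
    - ((z 1).im * theta1 z / (z 0).im ^ 2) • Lim 0)

lemma hasFDerivAt_u2' {z : Fin 2 → ℂ} (hx : 0 < (z 0).re) (hy : 0 < (z 0).im) :
    HasFDerivAt (fun w => -((w 1).im * theta1 w / (w 0).im)) (Du2 z) z := by
  have h1 := (Lim 1).hasFDerivAt.mul (hasFDerivAt_theta1 hx)
  have h := (h1.mul (hasFDerivAt_inv_im0 hy)).neg
  have h0 : (fun w : Fin 2 → ℂ => -((w 1).im * theta1 w / (w 0).im))
      = fun w => -((w 1).im * theta1 w * ((w 0).im)⁻¹) := by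
    funext w; rw [div_eq_mul_inv]
  rw [h0]
  refine h.congr_fderiv ?_
  ext w
  have hy' : (z 0).im ≠ 0 := ne_of_gt hy
  simp [Du2, smul_sub, smul_add, div_eq_mul_inv]
  field_simp
  ring



lemma hasFDerivAt_pair {f g : (Fin 2 → ℂ) → ℂ} {Lf Lg : (Fin 2 → ℂ) →L[ℝ] ℂ}
    {z : Fin 2 → ℂ} (hf : HasFDerivAt f Lf z) (hg : HasFDerivAt g Lg z) :
    HasFDerivAt (fun w => ![f w, g w]) (ContinuousLinearMap.pi ![Lf, Lg]) z := by
  apply hasFDerivAt_pi''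
  intro i
  fin_cases i
  · simpa using hf
  · simpa using hg

def DV1 (z : Fin 2 → ℂ) : (Fin 2 → ℂ) →L[ℝ] (Fin 2 → ℂ) :=
  ContinuousLinearMap.pi
    ![(ContinuousLinearMap.proj 0 : (Fin 2 → ℂ) →L[ℝ] ℂ),
      Complex.ofRealCLM.comp (Da z) + (Lim 1).smulRight Complex.I]

def DV2 (z : Fin 2 → ℂ) : (Fin 2 → ℂ) →L[ℝ] (Fin 2 → ℂ) :=
  ContinuousLinearMap.pi ![0, Complex.ofRealCLM.comp (Db z)]

lemma hasFDerivAt_V1 {z : Fin 2 → ℂ} (hx : 0 < (z 0).re) (hy : 0 < (z 0).im) :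
    HasFDerivAt affV1 (DV1 z) z := by
  have h1 : HasFDerivAt (fun w : Fin 2 → ℂ => (((w 1).im * cfun w : ℝ) : ℂ))
      (Complex.ofRealCLM.comp (Da z)) z := by
    have := Complex.ofRealCLM.hasFDerivAt.comp z (hasFDerivAt_afun hx hy)
    simpa [Function.comp_def] using this
  have h2 : HasFDerivAt (fun w : Fin 2 → ℂ => ((w 1).im : ℂ) * Complex.I)
      ((Lim 1).smulRight Complex.I) z := by
    have h0 : (fun w : Fin 2 → ℂ => ((w 1).im : ℂ) * Complex.I)
        = fun w => ((Lim 1).smulRight Complex.I) w := by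
      funext w
      simp [Complex.real_smul]
    rw [h0]
    exact ((Lim 1).smulRight Complex.I).hasFDerivAt
  have := hasFDerivAt_pair
    ((ContinuousLinearMap.proj 0 : (Fin 2 → ℂ) →L[ℝ] ℂ).hasFDerivAt) (h1.add h2)
  exact this

lemma hasFDerivAt_V2 {z : Fin 2 → ℂ} (hx : 0 < (z 0).re) (hy : 0 < (z 0).im) :
    HasFDerivAt affV2 (DV2 z) z := by
  have h1 : HasFDerivAt (fun w : Fin 2 → ℂ => (((w 0).im / theta1 w : ℝ) : ℂ))
      (Complex.ofRealCLM.comp (Db z)) z := by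
    have := Complex.ofRealCLM.hasFDerivAt.comp z (hasFDerivAt_bfun hx hy)
    simpa [Function.comp_def] using this
  have := hasFDerivAt_pair (hasFDerivAt_const (0 : ℂ) z) h1
  exact this


lemma hasFDerivAt_u1 {z : Fin 2 → ℂ} (hx : 0 < (z 0).re) :
    HasFDerivAt affu1 (-Dth z) z := (hasFDerivAt_theta1 hx).neg

lemma hasFDerivAt_u2 {z : Fin 2 → ℂ} (hx : 0 < (z 0).re) (hy : 0 < (z 0).im) :
    HasFDerivAt affu2 (Du2 z) z := hasFDerivAt_u2' hx hy

lemma hasFDerivAt_JV1 {z : Fin 2 → ℂ} (hx : 0 < (z 0).re) (hy : 0 < (z 0).im) :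
    HasFDerivAt (fun w => Complex.I • affV1 w) (Complex.I • DV1 z) z :=
  (hasFDerivAt_V1 hx hy).const_smul Complex.I

lemma hasFDerivAt_JV2 {z : Fin 2 → ℂ} (hx : 0 < (z 0).re) (hy : 0 < (z 0).im) :
    HasFDerivAt (fun w => Complex.I • affV2 w) (Complex.I • DV2 z) z :=
  (hasFDerivAt_V2 hx hy).const_smul Complex.I

lemma lieBracket_of_hasFDerivAt {V W : (Fin 2 → ℂ) → (Fin 2 → ℂ)}
    {L M : (Fin 2 → ℂ) →L[ℝ] (Fin 2 → ℂ)} {z : Fin 2 → ℂ}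
    (hV : HasFDerivAt V L z) (hW : HasFDerivAt W M z) :
    VectorField.lieBracket ℝ V W z = M (V z) - L (W z) := by
  rw [VectorField.lieBracket, hV.fderiv, hW.fderiv]


set_option linter.unnecessarySeqFocus false in
set_option maxHeartbeats 1000000 in
/-- On `Ω = {x₁ > 0, y₁ > 0} ⊆ ℂ²`, with `θ₁ = arctan(y₁/x₁)`,
`u₁ = -θ₁`, `u₂ = -y₂θ₁/y₁`, `Ṽ₁ = x₁∂x₁ + y₁∂y₁ + y₂(x₁/y₁ - 1/θ₁)∂x₂ + y₂∂y₂`,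
`Ṽ₂ = (y₁/θ₁)∂x₂`: one has `du_α(Ṽ_β) = 0`, `d^cu_α(Ṽ_β) = δ_{αβ}`, the Lie brackets
`[Ṽ₁,Ṽ₂] = Ṽ₂`, `[JṼ₁,JṼ₂] = Ṽ₂`, `[Ṽ₁,JṼ₁] = (2y₂/y₁)(x₁/y₁ - 1/θ₁)Ṽ₂`,
`[Ṽ₁,JṼ₂] = -(x₁/y₁ - 1/θ₁)Ṽ₂`, `[Ṽ₂,JṼ₂] = 0`; so `E₁ ↦ Ṽ₁, E₂ ↦ Ṽ₂` is a Lie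
algebra homomorphism from the nonabelian algebra with `[E₁,E₂] = E₂`, but
`Ṽ₁, Ṽ₂, JṼ₁, JṼ₂` do not span a Lie subalgebra with constant structure constants,
since `[Ṽ₁, JṼ₁]` has a nonconstant coefficient. -/
theorem affine_group_gradient_system :
    -- `du_α(Ṽ_β) = 0`
    (∀ z ∈ affOmega, fderiv ℝ affu1 z (affV1 z) = 0) ∧
    (∀ z ∈ affOmega, fderiv ℝ affu1 z (affV2 z) = 0) ∧
    (∀ z ∈ affOmega, fderiv ℝ affu2 z (affV1 z) = 0) ∧
    (∀ z ∈ affOmega, fderiv ℝ affu2 z (affV2 z) = 0) ∧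
    -- `d^cu_α(Ṽ_β) = δ_{αβ}`
    (∀ z ∈ affOmega, -fderiv ℝ affu1 z (Complex.I • affV1 z) = 1) ∧
    (∀ z ∈ affOmega, -fderiv ℝ affu1 z (Complex.I • affV2 z) = 0) ∧
    (∀ z ∈ affOmega, -fderiv ℝ affu2 z (Complex.I • affV1 z) = 0) ∧
    (∀ z ∈ affOmega, -fderiv ℝ affu2 z (Complex.I • affV2 z) = 1) ∧
    -- Lie bracket relations
    (∀ z ∈ affOmega, lieBracket ℝ affV1 affV2 z = affV2 z) ∧
    (∀ z ∈ affOmega,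
      lieBracket ℝ (fun w => Complex.I • affV1 w) (fun w => Complex.I • affV2 w) z
        = affV2 z) ∧
    (∀ z ∈ affOmega,
      lieBracket ℝ affV1 (fun w => Complex.I • affV1 w) z
        = ((2 * (z 1).im / (z 0).im) * ((z 0).re / (z 0).im - 1 / theta1 z))
            • affV2 z) ∧
    (∀ z ∈ affOmega,
      lieBracket ℝ affV1 (fun w => Complex.I • affV2 w) z
        = -(((z 0).re / (z 0).im - 1 / theta1 z) • affV2 z)) ∧
    (∀ z ∈ affOmega,
      lieBracket ℝ affV2 (fun w => Complex.I • affV2 w) z = 0) ∧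
    -- no constant structure constants: `[Ṽ₁, JṼ₁]` is not a constant-coefficient
    -- combination of `Ṽ₁, Ṽ₂, JṼ₁, JṼ₂`
    ¬ ∃ a b c d : ℝ, ∀ z ∈ affOmega,
        lieBracket ℝ affV1 (fun w => Complex.I • affV1 w) z
          = a • affV1 z + b • affV2 z
            + c • (Complex.I • affV1 z) + d • (Complex.I • affV2 z) := by
  have key : ∀ z ∈ affOmega,
      lieBracket ℝ affV1 (fun w => Complex.I • affV1 w) z
        = ((2 * (z 1).im / (z 0).im) * ((z 0).re / (z 0).im - 1 / theta1 z))
            • affV2 z := by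
    intro z hz
    obtain ⟨hx, hy⟩ := hz
    rw [lieBracket_of_hasFDerivAt (hasFDerivAt_V1 hx hy) (hasFDerivAt_JV1 hx hy)]
    have hx' := ne_of_gt hx
    have hy' := ne_of_gt hy
    have hθ := ne_of_gt (theta1_pos hx hy)
    have hr : (z 0).re ^ 2 + (z 0).im ^ 2 ≠ 0 := by positivity
    funext i
    fin_cases i
    · simp [DV1, DV2, affV1, affV2, Da, Db, Dc, Dth, cfun, Complex.real_smul]
    · apply Complex.ext <;>
        simp [DV1, DV2, affV1, affV2, Da, Db, Dc, Dth, cfun, Complex.mul_re, Complex.mul_im,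
          Complex.real_smul,
          -Complex.ofReal_div, -Complex.ofReal_inv, -Complex.ofReal_mul,
          -Complex.ofReal_pow] <;>
        field_simp <;> ring
  refine ⟨?_, ?_, ?_, ?_, ?_, ?_, ?_, ?_, ?_, ?_, key, ?_, ?_, ?_⟩
  · intro z hz
    obtain ⟨hx, hy⟩ := hz
    rw [(hasFDerivAt_u1 hx).fderiv]
    have hx' := ne_of_gt hx
    have hy' := ne_of_gt hy
    have hθ := ne_of_gt (theta1_pos hx hy)
    have hr : (z 0).re ^ 2 + (z 0).im ^ 2 ≠ 0 := by positivity
    simp [Dth, affV1]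
    field_simp
    ring
  · intro z hz
    obtain ⟨hx, hy⟩ := hz
    rw [(hasFDerivAt_u1 hx).fderiv]
    simp [Dth, affV2]
  · intro z hz
    obtain ⟨hx, hy⟩ := hz
    rw [(hasFDerivAt_u2 hx hy).fderiv]
    have hx' := ne_of_gt hx
    have hy' := ne_of_gt hy
    have hθ := ne_of_gt (theta1_pos hx hy)
    have hr : (z 0).re ^ 2 + (z 0).im ^ 2 ≠ 0 := by positivity
    simp [Du2, Dth, affV1]
    field_simp
    ring
  · intro z hz
    obtain ⟨hx, hy⟩ := hz
    rw [(hasFDerivAt_u2 hx hy).fderiv]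
    simp [Du2, Dth, affV2]
  · intro z hz
    obtain ⟨hx, hy⟩ := hz
    rw [(hasFDerivAt_u1 hx).fderiv]
    have hx' := ne_of_gt hx
    have hy' := ne_of_gt hy
    have hθ := ne_of_gt (theta1_pos hx hy)
    have hr : (z 0).re ^ 2 + (z 0).im ^ 2 ≠ 0 := by positivity
    simp [Dth, affV1, Complex.mul_re, Complex.mul_im]
    field_simp
  · intro z hz
    obtain ⟨hx, hy⟩ := hz
    rw [(hasFDerivAt_u1 hx).fderiv]
    simp [Dth, affV2]
  · intro z hz
    obtain ⟨hx, hy⟩ := hz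
    rw [(hasFDerivAt_u2 hx hy).fderiv]
    have hx' := ne_of_gt hx
    have hy' := ne_of_gt hy
    have hθ := ne_of_gt (theta1_pos hx hy)
    have hr : (z 0).re ^ 2 + (z 0).im ^ 2 ≠ 0 := by positivity
    simp [Du2, Dth, affV1, Complex.mul_re, Complex.mul_im]
    field_simp
    ring
  · intro z hz
    obtain ⟨hx, hy⟩ := hz
    rw [(hasFDerivAt_u2 hx hy).fderiv]
    have hx' := ne_of_gt hx
    have hy' := ne_of_gt hy
    have hθ := ne_of_gt (theta1_pos hx hy)
    have hr : (z 0).re ^ 2 + (z 0).im ^ 2 ≠ 0 := by positivity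
    simp [Du2, Dth, affV2, Complex.mul_re, Complex.mul_im]
    field_simp
  · intro z hz
    obtain ⟨hx, hy⟩ := hz
    rw [lieBracket_of_hasFDerivAt (hasFDerivAt_V1 hx hy) (hasFDerivAt_V2 hx hy)]
    have hx' := ne_of_gt hx
    have hy' := ne_of_gt hy
    have hθ := ne_of_gt (theta1_pos hx hy)
    have hr : (z 0).re ^ 2 + (z 0).im ^ 2 ≠ 0 := by positivity
    funext i
    fin_cases i
    · simp [DV1, DV2, affV1, affV2, Da, Db, Dc, Dth, cfun, Complex.real_smul]
    · apply Complex.ext <;>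
        simp [DV1, DV2, affV1, affV2, Da, Db, Dc, Dth, cfun, Complex.mul_re, Complex.mul_im,
          Complex.real_smul,
          -Complex.ofReal_div, -Complex.ofReal_inv, -Complex.ofReal_mul,
          -Complex.ofReal_pow] <;>
        field_simp <;> ring
  · intro z hz
    obtain ⟨hx, hy⟩ := hz
    rw [lieBracket_of_hasFDerivAt (hasFDerivAt_JV1 hx hy) (hasFDerivAt_JV2 hx hy)]
    have hx' := ne_of_gt hx
    have hy' := ne_of_gt hy
    have hθ := ne_of_gt (theta1_pos hx hy)
    have hr : (z 0).re ^ 2 + (z 0).im ^ 2 ≠ 0 := by positivity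
    funext i
    fin_cases i
    · simp [DV1, DV2, affV1, affV2, Da, Db, Dc, Dth, cfun, Complex.real_smul]
    · apply Complex.ext <;>
        simp [DV1, DV2, affV1, affV2, Da, Db, Dc, Dth, cfun, Complex.mul_re, Complex.mul_im,
          Complex.real_smul,
          -Complex.ofReal_div, -Complex.ofReal_inv, -Complex.ofReal_mul,
          -Complex.ofReal_pow] <;>
        field_simp <;> ring
  · intro z hz
    obtain ⟨hx, hy⟩ := hz
    rw [lieBracket_of_hasFDerivAt (hasFDerivAt_V1 hx hy) (hasFDerivAt_JV2 hx hy)]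
    have hx' := ne_of_gt hx
    have hy' := ne_of_gt hy
    have hθ := ne_of_gt (theta1_pos hx hy)
    have hr : (z 0).re ^ 2 + (z 0).im ^ 2 ≠ 0 := by positivity
    funext i
    fin_cases i
    · simp [DV1, DV2, affV1, affV2, Da, Db, Dc, Dth, cfun, Complex.real_smul]
    · apply Complex.ext <;>
        simp [DV1, DV2, affV1, affV2, Da, Db, Dc, Dth, cfun, Complex.mul_re, Complex.mul_im,
          Complex.real_smul,
          -Complex.ofReal_div, -Complex.ofReal_inv, -Complex.ofReal_mul,
          -Complex.ofReal_pow] <;>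
        field_simp <;> ring
  · intro z hz
    obtain ⟨hx, hy⟩ := hz
    rw [lieBracket_of_hasFDerivAt (hasFDerivAt_V2 hx hy) (hasFDerivAt_JV2 hx hy)]
    have hx' := ne_of_gt hx
    have hy' := ne_of_gt hy
    have hθ := ne_of_gt (theta1_pos hx hy)
    have hr : (z 0).re ^ 2 + (z 0).im ^ 2 ≠ 0 := by positivity
    funext i
    fin_cases i
    · simp [DV1, DV2, affV1, affV2, Da, Db, Dc, Dth, cfun, Complex.real_smul]
    · apply Complex.ext <;>
        simp [DV1, DV2, affV1, affV2, Da, Db, Dc, Dth, cfun, Complex.mul_re, Complex.mul_im,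
          Complex.real_smul,
          -Complex.ofReal_div, -Complex.ofReal_inv, -Complex.ofReal_mul,
          -Complex.ofReal_pow] <;>
        field_simp <;> ring
  · rintro ⟨a, b, c, d, h⟩
    have hpi : (0:ℝ) < Real.pi := Real.pi_pos
    have hpi4 : Real.pi ≠ 4 := ne_of_lt (by linarith [Real.pi_lt_d2])
    set p : Fin 2 → ℂ := ![1 + Complex.I, 0] with hp_def
    have hp : p ∈ affOmega := by
      constructor <;> simp [p, affOmega]
    have hθp : theta1 p = Real.pi / 4 := by
      simp [theta1, p, Real.arctan_one]
    have e1 := (key p hp).symm.trans (h p hp)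
    have e10 := congrFun e1 0
    have e11 := congrFun e1 1
    simp [p, affV1, affV2, hθp, theta1, Complex.real_smul, Complex.ext_iff,
      Complex.mul_re, Complex.mul_im,
      -Complex.ofReal_div, -Complex.ofReal_inv, -Complex.ofReal_mul,
      -Complex.ofReal_pow] at e10 e11
    obtain ⟨ha1, ha2⟩ := e10
    have ha : a = 0 := by linarith
    have hc : c = 0 := by linarith
    have hb : b = 0 := e11.1
    have hd : d = 0 := e11.2
    subst ha hb hc hd
    set q : Fin 2 → ℂ := ![1 + Complex.I, Complex.I] with hq_def
    have hq : q ∈ affOmega := by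
      constructor <;> simp [q, affOmega]
    have hθq : theta1 q = Real.pi / 4 := by
      simp [theta1, q, Real.arctan_one]
    have e2 := (key q hq).symm.trans (h q hq)
    have e21 := congrFun e2 1
    simp [q, affV1, affV2, hθq, theta1, Complex.real_smul, Complex.ext_iff,
      Complex.mul_re, Complex.mul_im,
      -Complex.ofReal_div, -Complex.ofReal_inv, -Complex.ofReal_mul,
      -Complex.ofReal_pow] at e21
    field_simp at e21
    exact hpi4 (by linarith)
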